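/- Let R and R' be commutative rings, D : R → R a derivation (an additive map with D(xy) = x·D(y) + y·D(x)), ε : R → R' a ring homomorphism, and r₁, …, r_N ∈ R with ε(rᵢ) = 0 for all i. If moreover ε(D²(rᵢ)) = 0 for all i, then ε(D^{N+1}(r₁ ⋯ r_N)) = 0. -/

import Mathlib

section Aux

variable {R R' : Type*} [CommRing R] [CommRing R'] {D : R → R}

private theorem iter_leibniz (hD_add : ∀ x y, D (x + y) = D x + D y)
    (hD_mul : ∀ x y, D (x * y) = x * D y + y * D x) (x y : R) (n : ℕ) :
    D^[n] (x * y) = ∑ j ∈ Finset.range (n + 1),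
      (n.choose j) • (D^[j] x * D^[n - j] y) := by
  let f : R →+ R := AddMonoidHom.mk' D hD_add
  have hDsum : ∀ (s : Finset ℕ) (g : ℕ → R), D (∑ i ∈ s, g i) = ∑ i ∈ s, D (g i) :=
    fun s g => map_sum f g s
  have hDsmul : ∀ (c : ℕ) (z : R), D (c • z) = c • D z := fun c z => f.map_nsmul c z
  induction n with
  | zero => simp
  | succ n ih =>
    rw [Function.iterate_succ_apply', ih, hDsum]
    have hterm : ∀ j ∈ Finset.range (n + 1),
        D ((n.choose j) • (D^[j] x * D^[n - j] y)) =
        (n.choose j) • (D^[j+1] x * D^[n - j] y)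
          + (n.choose j) • (D^[j] x * D^[n - j + 1] y) := by
      intro j _
      rw [hDsmul, hD_mul, ← smul_add]
      congr 1
      rw [Function.iterate_succ_apply', Function.iterate_succ_apply']
      ring
    rw [Finset.sum_congr rfl hterm, Finset.sum_add_distrib]
    conv_rhs => rw [Finset.sum_range_succ'
      (fun j => ((n+1).choose j) • (D^[j] x * D^[n + 1 - j] y)) (n+1)]
    simp only [Nat.succ_sub_succ, Nat.choose_succ_succ, add_smul,
      Nat.choose_zero_right, one_smul, Function.iterate_zero_apply, Nat.sub_zero]
    rw [Finset.sum_add_distrib, add_assoc]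
    congr 1
    rw [Finset.sum_range_succ'
      (fun j => (n.choose j) • (D^[j] x * D^[n - j + 1] y)) n]
    simp only [Nat.choose_zero_right, one_smul, Function.iterate_zero_apply, Nat.sub_zero]
    rw [Finset.sum_range_succ]
    rw [Nat.choose_succ_self, zero_smul, add_zero]
    congr 1
    refine Finset.sum_congr rfl fun j hj => ?_
    simp only [Finset.mem_range] at hj
    have h : n - (j + 1) + 1 = n - j := by omega
    rw [h]

private theorem key (hD_add : ∀ x y, D (x + y) = D x + D y)
    (hD_mul : ∀ x y, D (x * y) = x * D y + y * D x) (ε : R →+* R') :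
    ∀ (N : ℕ) (r : Fin N → R), (∀ i, ε (r i) = 0) → (∀ i, ε (D (D (r i))) = 0) →
    ∀ k, k ≤ N + 1 → k ≠ N → ε (D^[k] (∏ i, r i)) = 0 := by
  have hD1 : D 1 = 0 := by
    have := hD_mul 1 1
    simp only [one_mul, mul_one] at this
    -- D 1 = D 1 + D 1
    have : D 1 + D 1 = D 1 + 0 := by rw [add_zero, ← this]
    exact (add_left_cancel this)
  intro N
  induction N with
  | zero =>
    intro r _ _ k hk hk'
    interval_cases k
    · omega
    · simp [hD1]
  | succ N ih =>
    intro r hr hr2 k hk hk'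
    rw [Fin.prod_univ_succ, iter_leibniz hD_add hD_mul, map_sum]
    refine Finset.sum_eq_zero fun j hj => ?_
    simp only [Finset.mem_range] at hj
    rw [map_nsmul, map_mul]
    rcases j with _ | _ | _ | j
    · rw [Function.iterate_zero_apply, hr 0, zero_mul, smul_zero]
    · rw [Function.iterate_one]
      rw [ih (fun i => r i.succ) (fun i => hr i.succ) (fun i => hr2 i.succ)
        (k - 1) (by omega) (by omega), mul_zero, smul_zero]
    · have h2 : D^[2] (r 0) = D (D (r 0)) := by
        simp [Function.iterate_succ_apply']
      rw [h2, hr2 0, zero_mul, smul_zero]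
    · rw [ih (fun i => r i.succ) (fun i => hr i.succ) (fun i => hr2 i.succ)
        (k - (j + 3)) (by omega) (by omega), mul_zero, smul_zero]

end Aux

/-- If `D` is a derivation on a commutative ring `R`, `ε : R → R'` a ring homomorphism,
`r₁, …, r_N ∈ ker ε`, and also `ε(D²(rᵢ)) = 0` for all `i`, then
`ε(D^{N+1}(r₁ ⋯ r_N)) = 0`. -/
theorem derivation_pow_succ_prod_eq_zero
    {R R' : Type*} [CommRing R] [CommRing R']
    (D : R → R) (hD_add : ∀ x y, D (x + y) = D x + D y)
    (hD_mul : ∀ x y, D (x * y) = x * D y + y * D x)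
    (ε : R →+* R') {N : ℕ} (r : Fin N → R) (hr : ∀ i, ε (r i) = 0)
    (hr2 : ∀ i, ε (D (D (r i))) = 0) :
    ε (D^[N + 1] (∏ i, r i)) = 0 :=
  key hD_add hD_mul ε N r hr hr2 (N + 1) le_rfl (by omega)
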